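/- arXiv:2204.01085 — 2 statements merged into one kernel-verified Lean document; each statement's English description precedes it below -/
import Mathlib

section
/- The set LNR of all linear maps λ_{a,b} of the Hall affine plane A_H is a group under composition isomorphic to the multiplicative group of a field with q² elements (in particular, a cyclic group of order q² − 1); every λ_{a,b} maps each type 2 line to a type 2 line with the same slope (so LNR fixes each parallel class of NBF lines); and LNR acts transitively on the set of parallel classes of BF lines: for any two parallel classes of BF lines (including the class of vertical lines), some λ_{a,b} maps every line of the first class to a line of the second class. -/
open Polynomial

/-- The Hall system multiplication on `F × F`, with defining polynomial `x^2 - r*x - s`. -/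
def hallMul {F : Type*} [Field F] [DecidableEq F] (r s : F) (a b : F × F) : F × F :=
  if b.2 = 0 then (a.1 * b.1, a.2 * b.1)
  else (a.1 * b.1 - a.2 * b.2⁻¹ * (b.1 ^ 2 - r * b.1 - s),
        a.1 * b.2 - a.2 * b.1 + a.2 * r)

/-- Vertical line `[c] = {(c, y)}` in the Hall affine plane. -/
def vertLine {F : Type*} (c : F × F) : Set ((F × F) × (F × F)) := {P | P.1 = c}

/-- Non-vertical line `[m, k] = {(x, x·m + k)}` in the Hall affine plane. -/
def slopeLine {F : Type*} [Field F] [DecidableEq F] (r s : F) (m k : F × F) :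
    Set ((F × F) × (F × F)) :=
  {P | P.2 = hallMul r s P.1 m + k}

/-- The lines of the Hall affine plane `A_H`. -/
def IsHallLine {F : Type*} [Field F] [DecidableEq F] (r s : F)
    (ℓ : Set ((F × F) × (F × F))) : Prop :=
  (∃ c : F × F, ℓ = vertLine c) ∨ ∃ m k : F × F, ℓ = slopeLine r s m k

/-- A collineation of the Hall affine plane: a bijection of the point set mapping
every line onto a line. -/
def IsCollineation {F : Type*} [Field F] [DecidableEq F] (r s : F)
    (φ : (F × F) × (F × F) → (F × F) × (F × F)) : Prop :=
  Function.Bijective φ ∧ ∀ ℓ, IsHallLine r s ℓ → IsHallLine r s (φ '' ℓ)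

/-- The linear map `λ_{a,b} : (x,y) ↦ ((-ar+b)·x + a·y, as·x + b·y)`. -/
def lambdaMap {F : Type*} [Field F] (r s a b : F) :
    (F × F) × (F × F) → (F × F) × (F × F) :=
  fun P => ((-(a * r) + b) • P.1 + a • P.2, (a * s) • P.1 + b • P.2)

/-- The set `LNR` of all linear maps `λ_{a,b}`, `(a,b) ≠ (0,0)`. -/
def LNRset {F : Type*} [Field F] (r s : F) :
    Set ((F × F) × (F × F) → (F × F) × (F × F)) :=
  {f | ∃ a b : F, (a, b) ≠ ((0 : F), (0 : F)) ∧ f = lambdaMap r s a b}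

/-- The parallel classes of BF lines: the class of vertical lines (`none`) and,
for each `μ ∈ F`, the class of type 1 lines of slope `(μ, 0)`. -/
def BFclass {F : Type*} [Field F] [DecidableEq F] (r s : F) :
    Option F → Set (Set ((F × F) × (F × F)))
  | none => {ℓ | ∃ c : F × F, ℓ = vertLine c}
  | some μ => {ℓ | ∃ k : F × F, ℓ = slopeLine r s (μ, 0) k}



set_option linter.unusedSectionVars false
set_option linter.unusedTactic false
set_option linter.unnecessarySeqFocus false
set_option maxHeartbeats 1000000

section HallHelpers

variable {F : Type*} [Field F] [DecidableEq F] (r s : F)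

lemma lambdaMap_comp_eq (a b a' b' : F) : lambdaMap r s a b ∘ lambdaMap r s a' b' =
    lambdaMap r s (a * b' + a' * b - r * a * a') (b * b' + s * a * a') := by
  funext P
  simp only [lambdaMap, Function.comp_apply, Prod.mk.injEq]
  constructor <;> (match_scalars <;> ring)

lemma lambdaMap_zero_one : lambdaMap r s 0 1 = id := by
  funext P; simp [lambdaMap]

lemma hall_noroot (hirr : Irreducible (X ^ 2 - C r * X - C s : F[X])) (t : F) :
    t ^ 2 - r * t - s ≠ 0 := by
  intro h
  have hne : (X ^ 2 - C r * X - C s : F[X]) ≠ 0 := hirr.ne_zero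
  have hdeg : (X ^ 2 - C r * X - C s : F[X]).natDegree = 2 := by
    have : (X ^ 2 - C r * X - C s : F[X]) = C 1 * X ^ 2 + C (-r) * X + C (-s) := by
      simp; ring
    rw [this, natDegree_quadratic one_ne_zero]
  have h0 := (irreducible_iff_roots_eq_zero_of_degree_le_three (by omega) (by omega)).mp hirr
  have : t ∈ (X ^ 2 - C r * X - C s : F[X]).roots := by
    rw [mem_roots hne]
    simp [IsRoot, h]
  rw [h0] at this
  simp at this

lemma hall_irr' (hroot : ∀ t : F, t ^ 2 - r * t - s ≠ 0) :
    Irreducible (X ^ 2 + C r * X - C s : F[X]) := by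
  have hdeg : (X ^ 2 + C r * X - C s : F[X]).natDegree = 2 := by
    have : (X ^ 2 + C r * X - C s : F[X]) = C 1 * X ^ 2 + C r * X + C (-s) := by
      simp; ring
    rw [this, natDegree_quadratic one_ne_zero]
  rw [irreducible_iff_roots_eq_zero_of_degree_le_three (by omega) (by omega)]
  rw [Multiset.eq_zero_iff_forall_notMem]
  intro t ht
  have hne : (X ^ 2 + C r * X - C s : F[X]) ≠ 0 := fun h => by simp [h] at hdeg
  rw [mem_roots hne] at ht
  have : t ^ 2 + r * t - s = 0 := by simpa [IsRoot] using ht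
  exact hroot (-t) (by ring_nf; ring_nf at this; linear_combination this)

lemma hall_exists_inv (hroot : ∀ t : F, t ^ 2 - r * t - s ≠ 0) {a b : F}
    (h : (a, b) ≠ ((0 : F), (0 : F))) :
    ∃ a' b' : F, (a', b') ≠ ((0 : F), (0 : F)) ∧
      lambdaMap r s a b ∘ lambdaMap r s a' b' = id ∧
      lambdaMap r s a' b' ∘ lambdaMap r s a b = id := by
  have hN : b ^ 2 - r * a * b - s * a ^ 2 ≠ 0 := by
    rcases eq_or_ne a 0 with rfl | ha
    · have hb : b ≠ 0 := by simpa using h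
      simpa using pow_ne_zero 2 hb
    · intro hN
      refine hroot (b / a) ?_
      have : (b / a) ^ 2 - r * (b / a) - s = (b ^ 2 - r * a * b - s * a ^ 2) / a ^ 2 := by
        field_simp
      rw [this, hN, zero_div]
  set N := b ^ 2 - r * a * b - s * a ^ 2 with hNdef
  refine ⟨-a / N, (b - r * a) / N, ?_, ?_, ?_⟩
  · intro hc
    rw [Prod.mk.injEq] at hc
    have ha : a = 0 := by
      have := hc.1; field_simp at this; simpa using this
    have hb : b = 0 := by
      have := hc.2; rw [ha] at this; field_simp at this; simpa [ha] using this
    exact h (by rw [ha, hb])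
  · rw [lambdaMap_comp_eq]
    have e1 : a * ((b - r * a) / N) + (-a / N) * b - r * a * (-a / N) = 0 := by
      field_simp; ring
    have e2 : b * ((b - r * a) / N) + s * a * (-a / N) = 1 := by
      field_simp; ring
    rw [e1, e2, lambdaMap_zero_one]
  · rw [lambdaMap_comp_eq]
    have e1 : (-a / N) * b + a * ((b - r * a) / N) - r * (-a / N) * a = 0 := by
      field_simp; ring
    have e2 : ((b - r * a) / N) * b + s * (-a / N) * a = 1 := by
      field_simp; ring
    rw [e1, e2, lambdaMap_zero_one]

lemma hall_bijective (hroot : ∀ t : F, t ^ 2 - r * t - s ≠ 0) {a b : F}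
    (h : (a, b) ≠ ((0 : F), (0 : F))) : Function.Bijective (lambdaMap r s a b) := by
  obtain ⟨a', b', _, hfg, hgf⟩ := hall_exists_inv r s hroot h
  exact Function.bijective_iff_has_inverse.mpr
    ⟨lambdaMap r s a' b', fun x => congrFun hgf x, fun x => congrFun hfg x⟩

lemma hall_exists_gen [Fintype F] (hroot : ∀ t : F, t ^ 2 - r * t - s ≠ 0)
    (hp' : Irreducible (X ^ 2 + C r * X - C s : F[X])) :
    ∃ g ∈ LNRset (F := F) r s, ∀ f ∈ LNRset (F := F) r s, ∃ n : ℕ, f = g^[n] := by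
  haveI : Fact (Irreducible (X ^ 2 + C r * X - C s : F[X])) := ⟨hp'⟩
  set p' : F[X] := X ^ 2 + C r * X - C s with hp'def
  have hmonic : p'.Monic := by
    have : p' = X ^ 2 + (C r * X + C (-s)) := by rw [hp'def]; simp; ring
    rw [this]
    refine monic_X_pow_add (lt_of_le_of_lt (degree_add_le _ _) (max_lt ?_ ?_))
    · exact lt_of_le_of_lt (degree_C_mul_X_le r) (by decide)
    · exact lt_of_le_of_lt degree_C_le (by decide)
  have hdeg : p'.natDegree = 2 := by
    have : p' = C 1 * X ^ 2 + C r * X + C (-s) := by rw [hp'def]; simp; ring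
    rw [this, natDegree_quadratic one_ne_zero]
  set K := AdjoinRoot p' with hK
  set α : K := AdjoinRoot.root p' with hα0
  set A : F →+* K := algebraMap F K with hA
  have hα : α * α = -(A r) * α + A s := by
    have h0 : aeval α (X ^ 2 + C r * X - C s : F[X]) = 0 := by
      rw [AdjoinRoot.aeval_eq]
      exact AdjoinRoot.mk_eq_zero.mpr (dvd_of_eq hp'def.symm)
    simp only [map_add, map_sub, map_pow, map_mul, aeval_X, aeval_C] at h0
    rw [hA]
    linear_combination h0
  set e : F × F → K := fun p => A p.1 * α + A p.2 with he
  have he_mul : ∀ p q : F × F,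
      e (p.1 * q.2 + q.1 * p.2 - r * p.1 * q.1, p.2 * q.2 + s * p.1 * q.1) = e p * e q := by
    intro p q
    simp only [he, map_add, map_sub, map_mul]
    linear_combination -(A p.1 * A q.1) * hα
  have he_inj : Function.Injective e := by
    intro p q hpq
    simp only [he] at hpq
    by_cases h1 : p.1 = q.1
    · have : A p.2 = A q.2 := by
        rw [h1] at hpq
        exact add_left_cancel hpq
      have h2 : p.2 = q.2 := A.injective this
      exact Prod.ext h1 h2
    · exfalso
      have hd : A (p.1 - q.1) * α = A (q.2 - p.2) := by
        simp only [map_sub]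
        linear_combination hpq
      have hne : A (p.1 - q.1) ≠ 0 := by
        simp only [ne_eq, _root_.map_eq_zero, sub_eq_zero]
        exact h1
      set t : F := (q.2 - p.2) / (p.1 - q.1) with ht
      have hαt : α = A t := by
        rw [ht, map_div₀, eq_div_iff hne, mul_comm]
        exact hd
      have hz : A (t * t + r * t - s) = 0 := by
        simp only [map_add, map_sub, map_mul]
        rw [← hαt]
        linear_combination hα
      have h0 : t * t + r * t - s = 0 :=
        A.injective (by simpa using hz)
      exact hroot (-t) (by linear_combination h0)
  have he_surj : Function.Surjective e := by
    intro z
    obtain ⟨g, rfl⟩ := AdjoinRoot.mk_surjective (g := p') z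
    refine ⟨((g %ₘ p').coeff 1, (g %ₘ p').coeff 0), ?_⟩
    have hdeg' : (g %ₘ p').degree ≤ 1 := by
      have h2 : p'.degree = 2 := by
        rw [degree_eq_natDegree hmonic.ne_zero, hdeg]; rfl
      have := degree_modByMonic_lt g hmonic
      rw [h2] at this
      exact Order.le_of_lt_succ (by exact_mod_cast this)
    have hrepr : g %ₘ p' = C ((g %ₘ p').coeff 1) * X + C ((g %ₘ p').coeff 0) :=
      eq_X_add_C_of_degree_le_one hdeg'
    have hmk : AdjoinRoot.mk p' g = AdjoinRoot.mk p' (g %ₘ p') := by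
      conv_lhs => rw [← modByMonic_add_div g p']
      rw [map_add, map_mul, AdjoinRoot.mk_self, zero_mul, add_zero]
    rw [hmk]
    conv_rhs => rw [hrepr]
    simp only [he, map_add, map_mul, AdjoinRoot.mk_C, AdjoinRoot.mk_X]
    rw [hA, AdjoinRoot.algebraMap_eq]
  haveI : Module.Finite F K :=
    Module.Finite.of_basis (AdjoinRoot.powerBasis' hmonic).basis
  haveI : Finite K := Module.finite_of_finite F
  obtain ⟨ζ, hζ⟩ := IsCyclic.exists_generator (α := Kˣ)
  obtain ⟨p0, hp0⟩ := he_surj (ζ : K)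
  have hp0ne : p0 ≠ ((0 : F), (0 : F)) := by
    intro h
    have : e ((0 : F), (0 : F)) = 0 := by simp [he]
    rw [h, this] at hp0
    exact (Units.ne_zero ζ) hp0.symm
  refine ⟨lambdaMap r s p0.1 p0.2, ⟨p0.1, p0.2, by simpa using hp0ne, rfl⟩, ?_⟩
  rintro f ⟨a, b, hab, rfl⟩
  have heab : e (a, b) ≠ 0 := by
    intro h
    have h0 : e ((0 : F), (0 : F)) = 0 := by simp [he]
    exact hab (he_inj (h.trans h0.symm))
  obtain ⟨n, hn⟩ : ∃ n : ℕ, (ζ : K) ^ n = e (a, b) := by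
    have := mem_powers_iff_mem_zpowers.2 (hζ (Units.mk0 _ heab))
    obtain ⟨n, hn⟩ := (Submonoid.mem_powers_iff _ _).mp this
    exact ⟨n, by rw [← Units.val_pow_eq_pow_val, hn]; rfl⟩
  refine ⟨n, ?_⟩
  set step : F × F → F × F := fun p =>
    (p.1 * p0.2 + p0.1 * p.2 - r * p.1 * p0.1, p.2 * p0.2 + s * p.1 * p0.1) with hstep
  set pow : ℕ → F × F := fun n => step^[n] ((0 : F), (1 : F)) with hpow
  have key : ∀ m : ℕ, (lambdaMap r s p0.1 p0.2)^[m] = lambdaMap r s (pow m).1 (pow m).2 ∧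
      e (pow m) = (ζ : K) ^ m := by
    intro m
    induction m with
    | zero =>
      constructor
      · have h00 : pow 0 = ((0 : F), (1 : F)) := rfl
        rw [h00, Function.iterate_zero, lambdaMap_zero_one]
      · have h00 : pow 0 = ((0 : F), (1 : F)) := rfl
        rw [h00, pow_zero]
        simp [he]
    | succ m ih =>
      have hps : pow (m + 1) = step (pow m) := Function.iterate_succ_apply' step m _
      constructor
      · rw [Function.iterate_succ', ih.1, lambdaMap_comp_eq, hps]
        simp only [hstep]
        congr 1 <;> ring
      · rw [hps]
        simp only [hstep]
        have hmm := he_mul (pow m) p0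
        rw [hmm, ih.2, hp0, pow_succ]
  have hparams : (a, b) = pow n := by
    apply he_inj
    rw [(key n).2, hn]
  rw [(key n).1, ← hparams]

lemma hallMul_type1 (x : F × F) (μ : F) : hallMul r s x (μ, 0) = μ • x := by
  simp [hallMul, Prod.ext_iff, mul_comm]

lemma slopeLine_type1 (μ : F) (k : F × F) :
    slopeLine r s (μ, 0) k = {P : (F × F) × (F × F) | P.2 = μ • P.1 + k} := by
  ext P; simp [slopeLine, hallMul_type1]

lemma hall_V2V {b : F} (hb : b ≠ 0) (c : F × F) :
    lambdaMap r s 0 b '' vertLine c = vertLine (b • c) := by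
  ext Q
  constructor
  · rintro ⟨P, hP, rfl⟩
    simp only [vertLine, Set.mem_setOf_eq] at hP ⊢
    simp [lambdaMap, hP]
  · intro hQ
    simp only [vertLine, Set.mem_setOf_eq] at hQ
    refine ⟨(c, b⁻¹ • Q.2), rfl, ?_⟩
    simp only [lambdaMap]
    rw [Prod.ext_iff]
    constructor
    · simp [hQ]
    · simp [smul_smul, mul_inv_cancel₀ hb]

lemma hall_V2S {a : F} (ha : a ≠ 0) (b : F) (c : F × F) :
    lambdaMap r s a b '' vertLine c =
      slopeLine r s (b / a, 0) ((a * s - b / a * (-(a * r) + b)) • c) := by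
  rw [slopeLine_type1]
  ext Q
  constructor
  · rintro ⟨P, hP, rfl⟩
    simp only [vertLine, Set.mem_setOf_eq] at hP
    simp only [lambdaMap, Set.mem_setOf_eq, hP]
    match_scalars <;> (field_simp; try ring)
  · intro hQ
    simp only [Set.mem_setOf_eq] at hQ
    refine ⟨(c, a⁻¹ • (Q.1 - (-(a * r) + b) • c)), rfl, ?_⟩
    simp only [lambdaMap]
    rw [Prod.ext_iff]
    constructor
    · match_scalars <;> (field_simp; try ring)
    · rw [hQ]
      match_scalars <;> (field_simp; try ring)

lemma hall_S2V {a b μ : F} (hD : -(a * r) + b + a * μ = 0) (hs : a * s + b * μ ≠ 0) (k : F × F) :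
    lambdaMap r s a b '' slopeLine r s (μ, 0) k = vertLine (a • k) := by
  rw [slopeLine_type1]
  ext Q
  constructor
  · rintro ⟨P, hP, rfl⟩
    simp only [Set.mem_setOf_eq] at hP
    simp only [lambdaMap, vertLine, Set.mem_setOf_eq, hP]
    have : (-(a * r) + b) • P.1 + a • (μ • P.1 + k) = (-(a * r) + b + a * μ) • P.1 + a • k := by
      match_scalars <;> ring
    rw [this, hD, zero_smul, zero_add]
  · intro hQ
    simp only [vertLine, Set.mem_setOf_eq] at hQ
    set x : F × F := (a * s + b * μ)⁻¹ • (Q.2 - b • k) with hx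
    refine ⟨(x, μ • x + k), rfl, ?_⟩
    simp only [lambdaMap]
    rw [Prod.ext_iff]
    constructor
    · simp only
      rw [hQ]
      have : (-(a * r) + b) • x + a • (μ • x + k) = (-(a * r) + b + a * μ) • x + a • k := by
        match_scalars <;> ring
      rw [this, hD, zero_smul, zero_add]
    · simp only [hx]
      match_scalars <;> (field_simp; try ring)

lemma hall_S2S {a b μ : F} (hD : -(a * r) + b + a * μ ≠ 0) (k : F × F) :
    lambdaMap r s a b '' slopeLine r s (μ, 0) k =
      slopeLine r s ((a * s + b * μ) / (-(a * r) + b + a * μ), 0)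
        (b • k - ((a * s + b * μ) / (-(a * r) + b + a * μ)) • (a • k)) := by
  rw [slopeLine_type1, slopeLine_type1]
  set μ' : F := (a * s + b * μ) / (-(a * r) + b + a * μ) with hμ'
  ext Q
  constructor
  · rintro ⟨P, hP, rfl⟩
    simp only [Set.mem_setOf_eq] at hP
    simp only [lambdaMap, Set.mem_setOf_eq, hP, hμ']
    match_scalars <;> (field_simp; try ring)
  · intro hQ
    simp only [Set.mem_setOf_eq] at hQ
    set x : F × F := (-(a * r) + b + a * μ)⁻¹ • (Q.1 - a • k) with hx
    refine ⟨(x, μ • x + k), rfl, ?_⟩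
    simp only [lambdaMap]
    rw [Prod.ext_iff]
    constructor
    · simp only [hx]
      match_scalars <;> (field_simp; try ring)
    · simp only [hx]
      rw [hQ, hμ']
      match_scalars <;> (field_simp; try ring)

lemma hall_slope_forward (a b : F) {m : F × F} (hm : m.2 ≠ 0) (k : F × F)
    {P : (F × F) × (F × F)} (hP : P ∈ slopeLine r s m k) :
    lambdaMap r s a b P ∈ slopeLine r s m (b • k - a • hallMul r s k m) := by
  obtain ⟨⟨x1, x2⟩, ⟨y1, y2⟩⟩ := P
  obtain ⟨m1, m2⟩ := m
  obtain ⟨k1, k2⟩ := k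
  simp only [slopeLine, hallMul, Set.mem_setOf_eq, lambdaMap, Prod.ext_iff, Prod.smul_mk,
    smul_eq_mul, Prod.mk_add_mk, Prod.fst_add, Prod.snd_add, Prod.mk.injEq, if_neg hm] at hP ⊢
  simp only [Prod.fst_add, Prod.snd_add, Prod.smul_fst, Prod.smul_snd, smul_eq_mul,
    Prod.mk_sub_mk] at hP ⊢
  obtain ⟨h1, h2⟩ := hP
  subst h1 h2
  have hm2 : (m2 : F) ≠ 0 := hm
  constructor <;> (field_simp; ring)

lemma hallMul_zero_left (m : F × F) : hallMul r s (0 : F × F) m = (0 : F × F) := by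
  simp only [hallMul]
  split <;> simp [Prod.ext_iff]

lemma hall_NBF_image (a b a' b' : F)
    (hfg : lambdaMap r s a b ∘ lambdaMap r s a' b' = id)
    (hgf : lambdaMap r s a' b' ∘ lambdaMap r s a b = id)
    {m : F × F} (hm : m.2 ≠ 0) (k : F × F) :
    lambdaMap r s a b '' slopeLine r s m k =
      slopeLine r s m (b • k - a • hallMul r s k m) := by
  set k' : F × F := b • k - a • hallMul r s k m with hk'
  have hzero : (((0 : F), (0 : F)), k) ∈ slopeLine r s m k := by
    simp [slopeLine, hallMul_zero_left]
    exact hallMul_zero_left r s m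
  have h1 := hall_slope_forward r s a b hm k hzero
  have h2 := hall_slope_forward r s a' b' hm k' h1
  have h3 : lambdaMap r s a' b' (lambdaMap r s a b (((0 : F), (0 : F)), k)) =
      (((0 : F), (0 : F)), k) := congrFun hgf _
  rw [h3] at h2
  have hk3k : b' • k' - a' • hallMul r s k' m = k := by
    have h := h2
    simp only [slopeLine, Set.mem_setOf_eq, Prod.mk_zero_zero, hallMul_zero_left, zero_add] at h
    exact h.symm
  ext Q
  constructor
  · rintro ⟨P, hP, rfl⟩
    exact hall_slope_forward r s a b hm k hP
  · intro hQ
    refine ⟨lambdaMap r s a' b' Q, ?_, congrFun hfg Q⟩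
    have := hall_slope_forward r s a' b' hm k' hQ
    rwa [hk3k] at this

lemma hall_params_inj : Function.Injective (fun p : F × F => lambdaMap r s p.1 p.2) := by
  intro p q h
  have := congrFun h (show (F × F) × (F × F) from (((0 : F), (0 : F)), ((1 : F), (0 : F))))
  simp only [lambdaMap] at this
  rw [Prod.ext_iff, Prod.ext_iff, Prod.ext_iff] at this
  simp at this
  exact Prod.ext this.1 this.2

end HallHelpers

/-- `LNR` is a group under composition, isomorphic to the multiplicative group of the field
`F[α]` with `q²` elements (composition corresponds to the multiplication
`(a,b)·(a',b') = (ab' + a'b - raa', bb' + saa')` of `F[α]`, `α² = -rα + s`); in particular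
it is cyclic of order `q² - 1`. Each `λ_{a,b}` maps every type 2 line to a type 2 line of
the same slope, and `LNR` is transitive on the parallel classes of BF lines. -/
theorem LNR_linear_group {F : Type*} [Field F] [Fintype F] [DecidableEq F]
    (q : ℕ) (hq : Fintype.card F = q) (r s : F)
    (hirr : Irreducible (X ^ 2 - C r * X - C s : F[X])) :
    (id ∈ LNRset (F := F) r s) ∧
    (∀ f ∈ LNRset (F := F) r s, ∀ g ∈ LNRset (F := F) r s, f ∘ g ∈ LNRset (F := F) r s) ∧
    (∀ f ∈ LNRset (F := F) r s, Function.Bijective f ∧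
      ∃ g ∈ LNRset (F := F) r s, f ∘ g = id ∧ g ∘ f = id) ∧
    (∀ a b a' b' : F, lambdaMap r s a b ∘ lambdaMap r s a' b' =
      lambdaMap r s (a * b' + a' * b - r * a * a') (b * b' + s * a * a')) ∧
    (∃ g ∈ LNRset (F := F) r s, ∀ f ∈ LNRset (F := F) r s, ∃ n : ℕ, f = g^[n]) ∧
    ((LNRset (F := F) r s).ncard = q ^ 2 - 1) ∧
    (∀ f ∈ LNRset (F := F) r s, ∀ m k : F × F, m.2 ≠ 0 →
      ∃ k' : F × F, f '' slopeLine r s m k = slopeLine r s m k') ∧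
    (∀ d d' : Option F, ∃ f ∈ LNRset (F := F) r s,
      ∀ ℓ ∈ BFclass r s d, f '' ℓ ∈ BFclass r s d') := by
  have hroot : ∀ t : F, t ^ 2 - r * t - s ≠ 0 := hall_noroot r s hirr
  refine ⟨⟨0, 1, by simp, (lambdaMap_zero_one r s).symm⟩, ?_, ?_, lambdaMap_comp_eq r s,
    hall_exists_gen r s hroot (hall_irr' r s hroot), ?_, ?_, ?_⟩
  · -- closure
    rintro f ⟨a, b, hab, rfl⟩ g ⟨a', b', hab', rfl⟩
    rw [lambdaMap_comp_eq]
    refine ⟨_, _, ?_, rfl⟩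
    intro h
    rw [Prod.mk.injEq] at h
    obtain ⟨hA, hB⟩ := h
    have hbij : Function.Bijective (lambdaMap r s (a * b' + a' * b - r * a * a')
        (b * b' + s * a * a')) := by
      rw [← lambdaMap_comp_eq]
      exact (hall_bijective r s hroot hab).comp (hall_bijective r s hroot hab')
    rw [hA, hB] at hbij
    have hcontra := hbij.1 (a₁ := (((0 : F), (0 : F)), ((0 : F), (0 : F))))
      (a₂ := (((1 : F), (0 : F)), ((0 : F), (0 : F)))) (by simp [lambdaMap, Prod.ext_iff])
    simp [Prod.ext_iff] at hcontra
  · -- bijective + inverse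
    rintro f ⟨a, b, hab, rfl⟩
    obtain ⟨a', b', hab', hfg, hgf⟩ := hall_exists_inv r s hroot hab
    exact ⟨hall_bijective r s hroot hab, lambdaMap r s a' b', ⟨a', b', hab', rfl⟩, hfg, hgf⟩
  · -- cardinality
    have himage : LNRset (F := F) r s =
        (fun p : F × F => lambdaMap r s p.1 p.2) '' {p : F × F | p ≠ ((0 : F), (0 : F))} := by
      ext f
      constructor
      · rintro ⟨a, b, hab, rfl⟩
        exact ⟨(a, b), hab, rfl⟩
      · rintro ⟨p, hp, rfl⟩
        exact ⟨p.1, p.2, by simpa using hp, rfl⟩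
    rw [himage, Set.ncard_image_of_injective _ (hall_params_inj r s)]
    have hset : {p : F × F | p ≠ ((0 : F), (0 : F))} =
        Set.univ \ {((0 : F), (0 : F))} := by
      ext p; simp
    rw [hset, Set.ncard_diff_singleton_of_mem (Set.mem_univ _), Set.ncard_univ,
      Nat.card_eq_fintype_card, Fintype.card_prod, hq, pow_two]
  · -- NBF lines
    rintro f ⟨a, b, hab, rfl⟩ m k hm
    obtain ⟨a', b', hab', hfg, hgf⟩ := hall_exists_inv r s hroot hab
    exact ⟨_, hall_NBF_image r s a b a' b' hfg hgf hm k⟩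
  · -- transitivity on BF classes
    intro d d'
    match d, d' with
    | none, none =>
      refine ⟨lambdaMap r s 0 1, ⟨0, 1, by simp, rfl⟩, ?_⟩
      rintro ℓ ⟨c, rfl⟩
      rw [lambdaMap_zero_one, Set.image_id]
      exact ⟨c, rfl⟩
    | none, some μ' =>
      refine ⟨lambdaMap r s 1 μ', ⟨1, μ', by simp, rfl⟩, ?_⟩
      rintro ℓ ⟨c, rfl⟩
      rw [hall_V2S r s one_ne_zero μ' c]
      simp only [div_one]
      exact ⟨_, rfl⟩
    | some μ, none =>
      refine ⟨lambdaMap r s 1 (r - μ), ⟨1, r - μ, by simp, rfl⟩, ?_⟩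
      rintro ℓ ⟨k, rfl⟩
      rw [hall_S2V r s (by ring) (fun h => hroot μ (by linear_combination -h)) k]
      exact ⟨_, rfl⟩
    | some μ, some μ' =>
      by_cases hμ : μ = μ'
      · subst hμ
        refine ⟨lambdaMap r s 0 1, ⟨0, 1, by simp, rfl⟩, ?_⟩
        rintro ℓ ⟨k, rfl⟩
        rw [lambdaMap_zero_one, Set.image_id]
        exact ⟨k, rfl⟩
      · have hab : ((μ - μ' : F), (μ' * μ - μ' * r - s : F)) ≠ ((0 : F), (0 : F)) := by
          intro h
          rw [Prod.mk.injEq] at h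
          exact hμ (sub_eq_zero.mp h.1)
        have hD : -((μ - μ') * r) + (μ' * μ - μ' * r - s) + (μ - μ') * μ ≠ 0 := by
          intro h
          exact hroot μ (by linear_combination h)
        refine ⟨lambdaMap r s (μ - μ') (μ' * μ - μ' * r - s),
          ⟨μ - μ', μ' * μ - μ' * r - s, hab, rfl⟩, ?_⟩
        rintro ℓ ⟨k, rfl⟩
        rw [hall_S2S r s hD k]
        have hslope : ((μ - μ') * s + (μ' * μ - μ' * r - s) * μ) /
            (-((μ - μ') * r) + (μ' * μ - μ' * r - s) + (μ - μ') * μ) = μ' := by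
          rw [div_eq_iff hD]; ring
        rw [hslope]
        exact ⟨_, rfl⟩
end

section
/- The group of collineations of the Hall affine plane A_H generated by all translations τ_{a,b} and all autotopisms σ_S acts transitively on the set of all type 2 lines, and acts transitively on the set of all vertical lines. -/
open Polynomial

/-- The translation `τ_{a,b} : (x,y) ↦ (x + a, y + b)`. -/
def tauMap {F : Type*} [Field F] (a b : F × F) :
    (F × F) × (F × F) → (F × F) × (F × F) :=
  fun P => (P.1 + a, P.2 + b)

/-- Right action of a `2 × 2` matrix on a row vector `x = (x₁, x₂)`. -/
def rmul {F : Type*} [Field F] (S : Matrix (Fin 2) (Fin 2) F) (x : F × F) : F × F :=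
  (x.1 * S 0 0 + x.2 * S 1 0, x.1 * S 0 1 + x.2 * S 1 1)

/-- The autotopism `σ_S : (x,y) ↦ (xS, yS)`. -/
def sigmaMap {F : Type*} [Field F] (S : Matrix (Fin 2) (Fin 2) F) :
    (F × F) × (F × F) → (F × F) × (F × F) :=
  fun P => (rmul S P.1, rmul S P.2)

/-- The translations, as permutations of the point set. -/
def TRperms (F : Type*) [Field F] : Set (Equiv.Perm ((F × F) × (F × F))) :=
  {g | ∃ a b : F × F, ⇑g = tauMap a b}

/-- The autotopisms, as permutations of the point set. -/
def ATPperms (F : Type*) [Field F] : Set (Equiv.Perm ((F × F) × (F × F))) :=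
  {g | ∃ S : GL (Fin 2) F, ⇑g = sigmaMap (S : Matrix (Fin 2) (Fin 2) F)}


section Aux
set_option linter.unusedSectionVars false
variable {F : Type*} [Field F] [DecidableEq F]

lemma rmul_rmul (A B : Matrix (Fin 2) (Fin 2) F) (x : F × F) :
    rmul B (rmul A x) = rmul (A * B) x := by
  simp only [rmul, Matrix.mul_apply, Fin.sum_univ_two, Prod.mk.injEq]
  constructor <;> ring

lemma rmul_one' (x : F × F) : rmul (1 : Matrix (Fin 2) (Fin 2) F) x = x := by
  simp [rmul, Matrix.one_apply]

def tauPerm (a b : F × F) : Equiv.Perm ((F × F) × (F × F)) :=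
  Equiv.prodCongr (Equiv.addRight a) (Equiv.addRight b)

lemma tauPerm_coe (a b : F × F) : ⇑(tauPerm a b) = tauMap a b := rfl

def sigmaPerm (S Sinv : Matrix (Fin 2) (Fin 2) F) (h1 : S * Sinv = 1) (h2 : Sinv * S = 1) :
    Equiv.Perm ((F × F) × (F × F)) where
  toFun := sigmaMap S
  invFun := sigmaMap Sinv
  left_inv P := by simp [sigmaMap, rmul_rmul, h1, rmul_one']
  right_inv P := by simp [sigmaMap, rmul_rmul, h2, rmul_one']

lemma tau_image_slope (r s : F) (b m k : F × F) :
    tauMap (0 : F × F) b '' slopeLine r s m k = slopeLine r s m (k + b) := by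
  ext P
  constructor
  · rintro ⟨Q, hQ, rfl⟩
    simp only [slopeLine, Set.mem_setOf_eq, tauMap] at hQ ⊢
    rw [add_zero, hQ]; abel
  · intro hP
    refine ⟨(P.1, P.2 - b), ?_, ?_⟩
    · simp only [slopeLine, Set.mem_setOf_eq] at hP ⊢
      rw [hP]; abel
    · simp [tauMap]

lemma tau_image_vert (a b c : F × F) :
    tauMap a b '' vertLine c = vertLine (c + a) := by
  ext P
  constructor
  · rintro ⟨Q, hQ, rfl⟩
    simp only [vertLine, Set.mem_setOf_eq, tauMap] at hQ ⊢
    rw [hQ]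
  · intro hP
    refine ⟨(c, P.2 - b), rfl, ?_⟩
    simp only [vertLine, Set.mem_setOf_eq] at hP
    simp [tauMap, ← hP]

lemma sigma_image_slope (r s : F) (S Sinv : Matrix (Fin 2) (Fin 2) F)
    (h1 : S * Sinv = 1) (h2 : Sinv * S = 1) (m m' : F × F)
    (key : ∀ x, hallMul r s (rmul S x) m' = rmul S (hallMul r s x m)) :
    sigmaMap S '' slopeLine r s m 0 = slopeLine r s m' 0 := by
  ext P
  constructor
  · rintro ⟨Q, hQ, rfl⟩
    simp only [slopeLine, Set.mem_setOf_eq, add_zero] at hQ ⊢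
    simp only [sigmaMap, hQ, key]
  · intro hP
    simp only [slopeLine, Set.mem_setOf_eq, add_zero] at hP
    refine ⟨(rmul Sinv P.1, rmul Sinv P.2), ?_, ?_⟩
    · simp only [slopeLine, Set.mem_setOf_eq, add_zero]
      have := key (rmul Sinv P.1)
      rw [rmul_rmul, h2, rmul_one'] at this
      rw [hP, this, rmul_rmul, h1, rmul_one']
    · simp only [sigmaMap, rmul_rmul, h2, rmul_one']

lemma hall_key (r s t u : F) (m : F × F) (hm : m.2 ≠ 0) (hu : u ≠ 0) (x : F × F) :
    hallMul r s (rmul ![![1,0],![t,u]] x) (m.1 + t*m.2, u*m.2)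
      = rmul ![![1,0],![t,u]] (hallMul r s x m) := by
  have h2 : u * m.2 ≠ 0 := mul_ne_zero hu hm
  simp only [hallMul, rmul, if_neg hm, if_neg h2, Prod.mk.injEq,
    Matrix.cons_val', Matrix.cons_val_zero, Matrix.cons_val_one, Matrix.head_cons,
    Matrix.head_fin_const, Matrix.empty_val', Matrix.cons_val_fin_one]
  constructor
  · field_simp
    ring
  · field_simp
    ring

end Aux

/-- The group generated by the translations and the autotopisms acts transitively on the
set of type 2 lines and transitively on the set of vertical lines. -/
theorem TR_ATP_transitive {F : Type*} [Field F] [Fintype F] [DecidableEq F]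
    (q : ℕ) (hq : Fintype.card F = q) (r s : F)
    (hirr : Irreducible (X ^ 2 - C r * X - C s : F[X])) :
    (∀ m k m' k' : F × F, m.2 ≠ 0 → m'.2 ≠ 0 →
      ∃ g ∈ Subgroup.closure (TRperms F ∪ ATPperms F),
        ⇑g '' slopeLine r s m k = slopeLine r s m' k') ∧
    (∀ c c' : F × F,
      ∃ g ∈ Subgroup.closure (TRperms F ∪ ATPperms F),
        ⇑g '' vertLine c = vertLine c') := by
  constructor
  · intro m k m' k' hm hm'
    set t := (m'.1 - m.1) / m.2 with ht
    set u := m'.2 / m.2 with hudef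
    have hu : u ≠ 0 := div_ne_zero hm' hm
    have hm'eq : m' = (m.1 + t * m.2, u * m.2) := by
      refine Prod.ext ?_ ?_ <;> simp only [ht, hudef] <;> field_simp <;> ring
    set S : Matrix (Fin 2) (Fin 2) F := ![![1,0],![t,u]] with hS
    set Si : Matrix (Fin 2) (Fin 2) F := ![![1,0],![-t/u,1/u]] with hSi
    have h1 : S * Si = 1 := by
      ext i j
      rw [Matrix.mul_apply, Fin.sum_univ_two]
      fin_cases i <;> fin_cases j <;>
        simp [hS, hSi, Matrix.mul_apply, Fin.sum_univ_two, Matrix.one_apply] <;>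
        field_simp <;> ring
    have h2 : Si * S = 1 := by
      ext i j
      rw [Matrix.mul_apply, Fin.sum_univ_two]
      fin_cases i <;> fin_cases j <;>
        simp [hS, hSi, Matrix.mul_apply, Fin.sum_univ_two, Matrix.one_apply] <;>
        field_simp <;> ring
    have key : ∀ x, hallMul r s (rmul S x) m' = rmul S (hallMul r s x m) := by
      intro x
      rw [hm'eq]
      exact hall_key r s t u m hm hu x
    refine ⟨tauPerm 0 k' * sigmaPerm S Si h1 h2 * tauPerm 0 (-k), ?_, ?_⟩
    · refine mul_mem (mul_mem ?_ ?_) ?_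
      · exact Subgroup.subset_closure (Set.mem_union_left _ ⟨0, k', rfl⟩)
      · exact Subgroup.subset_closure (Set.mem_union_right _ ⟨⟨S, Si, h1, h2⟩, rfl⟩)
      · exact Subgroup.subset_closure (Set.mem_union_left _ ⟨0, -k, rfl⟩)
    · have hcoe : ⇑(tauPerm 0 k' * sigmaPerm S Si h1 h2 * tauPerm (0 : F × F) (-k))
          = tauMap 0 k' ∘ (sigmaMap S ∘ tauMap 0 (-k)) := rfl
      rw [hcoe, Set.image_comp, Set.image_comp, tau_image_slope,
        add_neg_cancel, sigma_image_slope r s S Si h1 h2 m m' key,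
        tau_image_slope, zero_add]
  · intro c c'
    refine ⟨tauPerm (c' - c) 0, ?_, ?_⟩
    · exact Subgroup.subset_closure (Set.mem_union_left _ ⟨c' - c, 0, rfl⟩)
    · rw [tauPerm_coe, tau_image_vert, add_sub_cancel]
end
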